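/- Let R be a perfect ring of characteristic p, let n ≥ 2, and let M be a projective W_n(R)-module of finite type equipped with a Frobenius-linear map F : M → M and a Frobenius^{-1}-linear map V : M → M satisfying FV = p and VF = p. Then on M̄ = M/pM the induced maps F̄ and V̄ satisfy Ker(F̄) = Im(V̄) and Ker(V̄) = Im(F̄). -/

import Mathlib

open Function

/-- The ring homomorphism `W_n(R) → W_n(S)` induced by `f : R → S`. -/
noncomputable def truncatedWittVectorMap (p : ℕ) [Fact p.Prime] (n : ℕ)
    {R S : Type*} [CommRing R] [CommRing S] (f : R →+* S) :
    TruncatedWittVector p n R →+* TruncatedWittVector p n S :=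
  RingHom.liftOfRightInverse (WittVector.truncate n) TruncatedWittVector.out
    TruncatedWittVector.truncateFun_out
    ⟨(WittVector.truncate n).comp (WittVector.map f), by
      intro x hx
      rw [WittVector.mem_ker_truncate] at hx
      rw [RingHom.mem_ker, RingHom.comp_apply, ← RingHom.mem_ker,
        WittVector.mem_ker_truncate]
      intro i hi
      rw [WittVector.map_coeff, hx i hi, map_zero]⟩

section RingLemma

variable (p : ℕ) [hp : Fact p.Prime] {R : Type*} [CommRing R] [CharP R p] [PerfectRing R p]

local notation "𝕎" => WittVector p

lemma truncate_out' {n : ℕ} (a : TruncatedWittVector p n R) :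
    WittVector.truncate n a.out = a := a.truncateFun_out

lemma tw_p_torsion {n : ℕ} (hn : 2 ≤ n) (a : TruncatedWittVector p n R)
    (ha : (p : TruncatedWittVector p n R) * a = 0) :
    ∃ b, a = (p : TruncatedWittVector p n R) * b := by
  have hout : ∀ j, j + 1 < n → a.out.coeff j = 0 := by
    intro j hj
    have h0 : WittVector.truncate n (a.out * (p : 𝕎 R)) = 0 := by
      rw [map_mul, map_natCast, truncate_out', mul_comm, ha]
    have h1 := (WittVector.mem_ker_truncate n _).mp (RingHom.mem_ker.mpr h0) (j+1) hj
    rw [WittVector.mul_charP_coeff_succ] at h1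
    exact (frobeniusEquiv R p).injective (by simpa [frobeniusEquiv_apply, frobenius_def, hp.out.ne_zero] using h1)
  refine ⟨WittVector.truncate n
    (WittVector.mk p fun i => (frobeniusEquiv R p).symm (a.out.coeff (i+1))), ?_⟩
  conv_lhs => rw [← truncate_out' p a]
  rw [← map_natCast (WittVector.truncate n) p, ← map_mul, mul_comm]
  apply TruncatedWittVector.ext
  intro i
  rw [WittVector.coeff_truncate, WittVector.coeff_truncate]
  rcases i with ⟨i, hi⟩
  cases i with
  | zero =>
    rw [WittVector.mul_charP_coeff_zero]
    exact hout 0 (by omega)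
  | succ j =>
    rw [WittVector.mul_charP_coeff_succ]
    simp [WittVector.coeff_mk]

end RingLemma

lemma proj_p_torsion {A : Type*} [CommRing A] {M : Type*} [AddCommGroup M] [Module A M]
    [Module.Projective A M] (p : ℕ)
    (hA : ∀ a : A, (p : A) * a = 0 → ∃ b, a = (p : A) * b)
    (x : M) (hx : p • x = 0) : ∃ m : M, x = p • m := by
  classical
  obtain ⟨s, hs⟩ := Module.projective_def.mp ‹Module.Projective A M›
  set g : M →₀ A := s x with hg
  have hgz : ∀ m : M, (p : A) * g m = 0 := by
    intro m
    have h1 : (p • g : M →₀ A) = 0 := by rw [hg, ← map_nsmul s, hx, map_zero]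
    have h2 : (p • g : M →₀ A) m = 0 := by rw [h1]; rfl
    rw [Finsupp.smul_apply, nsmul_eq_mul] at h2
    exact h2
  have key : ∀ a : A, ∃ b : A, ((p:A) * a = 0 → a = (p:A) * b) ∧ (a = 0 → b = 0) := by
    intro a
    by_cases h0 : a = 0
    · exact ⟨0, fun _ => by simp [h0], fun _ => rfl⟩
    by_cases h : (p:A) * a = 0
    · obtain ⟨b, hb⟩ := hA a h
      exact ⟨b, fun _ => hb, fun h' => absurd h' h0⟩
    · exact ⟨0, fun h' => absurd h' h, fun h' => absurd h' h0⟩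
  choose w hw1 hw2 using key
  have hw0 : w 0 = 0 := hw2 0 rfl
  refine ⟨Finsupp.linearCombination A id (g.mapRange w hw0), ?_⟩
  have hxg : x = Finsupp.linearCombination A id g := (hs x).symm
  have hgeq : g = p • g.mapRange w hw0 := by
    ext m
    rw [Finsupp.smul_apply, Finsupp.mapRange_apply, nsmul_eq_mul]
    exact hw1 (g m) (hgz m)
  rw [hxg]
  conv_lhs => rw [hgeq]
  rw [map_nsmul]

/-- Let `R` be a perfect ring of characteristic `p`, `n ≥ 2`, and `M` a finitely generated
projective `W_n(R)`-module with a Frobenius-linear map `F` and a Frobenius⁻¹-linear map `V`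
satisfying `FV = p` and `VF = p`.  Then on `M̄ = M/pM` one has `Ker F̄ = Im V̄` and
`Ker V̄ = Im F̄` (expressed elementwise modulo `pM`). -/
theorem kernel_image_mod_p_of_FV (p : ℕ) [Fact p.Prime]
    (R : Type*) [CommRing R] [CharP R p] [PerfectRing R p] (n : ℕ) (hn : 2 ≤ n)
    (M : Type*) [AddCommGroup M] [Module (TruncatedWittVector p n R) M]
    [Module.Projective (TruncatedWittVector p n R) M]
    [Module.Finite (TruncatedWittVector p n R) M]
    (F : M →ₛₗ[truncatedWittVectorMap p n (frobenius R p)] M)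
    (V : M →ₛₗ[truncatedWittVectorMap p n ((frobeniusEquiv R p).symm : R →+* R)] M)
    (hFV : ∀ x : M, F (V x) = p • x)
    (hVF : ∀ x : M, V (F x) = p • x) :
    (∀ x : M, (∃ m, F x = p • m) ↔ ∃ y m, x = V y + p • m) ∧
    (∀ x : M, (∃ m, V x = p • m) ↔ ∃ y m, x = F y + p • m) := by
  have key : ∀ x : M, p • x = 0 → ∃ m : M, x = p • m :=
    fun x hx => proj_p_torsion (A := TruncatedWittVector p n R) p (fun a ha => tw_p_torsion p hn a ha) x hx
  constructor
  · intro x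
    constructor
    · rintro ⟨m, hm⟩
      have h1 : F (x - V m) = 0 := by rw [map_sub, hm, hFV, sub_self]
      have h2 : p • (x - V m) = 0 := by rw [← hVF, h1, map_zero]
      obtain ⟨m', hm'⟩ := key _ h2
      exact ⟨m, m', by rw [← hm']; abel⟩
    · rintro ⟨y, m, rfl⟩
      refine ⟨y + F m, ?_⟩
      rw [map_add, hFV, map_nsmul, smul_add]
  · intro x
    constructor
    · rintro ⟨m, hm⟩
      have h1 : V (x - F m) = 0 := by rw [map_sub, hm, hVF, sub_self]
      have h2 : p • (x - F m) = 0 := by rw [← hFV, h1, map_zero]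
      obtain ⟨m', hm'⟩ := key _ h2
      exact ⟨m, m', by rw [← hm']; abel⟩
    · rintro ⟨y, m, rfl⟩
      refine ⟨y + V m, ?_⟩
      rw [map_add, hVF, map_nsmul, smul_add]
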